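/- Let m > 0 and r ∈ ℝ, and let X be a random variable such that (E|X|^p)^{1/p} ≤ p^{1/m} · (ln p)^{-r} for every real p ≥ 2. Then there exist constants K > 0 and y_0 ≥ e, depending only on m and r, such that for every y ≥ y_0 one has P(|X| ≥ y) ≤ exp( −K · y^m · (ln y)^{r m} ). -/

import Mathlib

open MeasureTheory ProbabilityTheory Real

/-- If `(E|X|^p)^{1/p} ≤ p^{1/m} (ln p)^{-r}` for all real `p ≥ 2` (i.e. `X` lies in the
Grand Lebesgue space generated by `ψ_{m,r}(p) = p^{1/m} (ln p)^{-r}`), then there are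
`K > 0` and `y₀ ≥ e`, depending only on `m` and `r`, with
`P(|X| ≥ y) ≤ exp(-K y^m (ln y)^{rm})` for all `y ≥ y₀`. -/
theorem stmt_19 {Ω : Type*} [MeasurableSpace Ω] (P : Measure Ω) [IsProbabilityMeasure P]
    (m : ℝ) (hm : 0 < m) (r : ℝ)
    (X : Ω → ℝ) (hXm : Measurable X)
    (hint : ∀ p : ℝ, 2 ≤ p → Integrable (fun ω => |X ω| ^ p) P)
    (hmom : ∀ p : ℝ, 2 ≤ p →
      (∫ ω, |X ω| ^ p ∂P) ^ (1 / p) ≤ p ^ (1 / m) * Real.log p ^ (-r)) :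
    ∃ K y₀ : ℝ, 0 < K ∧ Real.exp 1 ≤ y₀ ∧ ∀ y : ℝ, y₀ ≤ y →
      P {ω | y ≤ |X ω|} ≤
        ENNReal.ofReal (Real.exp (-K * y ^ m * Real.log y ^ (r * m))) := by
  -- the small constant
  set C : ℝ := Real.exp (-1) * m ^ r * 2 ^ (-|r|) with hCdef
  have hCpos : 0 < C := by positivity
  set a : ℝ := min 1 (C ^ m) with hadef
  have hapos : 0 < a := lt_min one_pos (Real.rpow_pos_of_pos hCpos m)
  have haC : a ^ (1 / m) ≤ C := by
    have h1 : a ^ (1 / m) ≤ (C ^ m) ^ (1 / m) :=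
      Real.rpow_le_rpow hapos.le (min_le_right _ _) (by positivity)
    rwa [← Real.rpow_mul hCpos.le, mul_one_div, div_self hm.ne', Real.rpow_one] at h1
  set B : ℝ := |Real.log a| + 2 * |r * m| with hBdef
  have hB0 : 0 ≤ B := by positivity
  set t₀ : ℝ := max (max 1 (2 / m)) ((4 * (B + 1) / m) ^ 2) with ht₀def
  have ht₀1 : (1 : ℝ) ≤ t₀ := le_trans (le_max_left _ _) (le_max_left _ _)
  refine ⟨a, Real.exp t₀, hapos, Real.exp_le_exp.mpr ht₀1, ?_⟩
  intro y hy
  have hy0 : 0 < y := lt_of_lt_of_le (Real.exp_pos t₀) hy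
  set t := Real.log y with htdef
  have ht : t₀ ≤ t := (Real.le_log_iff_exp_le hy0).mpr hy
  have ht1 : (1 : ℝ) ≤ t := ht₀1.trans ht
  have ht0 : (0 : ℝ) < t := lt_of_lt_of_le one_pos ht1
  -- square root facts
  set s := Real.sqrt t with hsdef
  have hs1 : (1 : ℝ) ≤ s := by
    rw [hsdef, show (1 : ℝ) = Real.sqrt 1 by rw [Real.sqrt_one]]
    exact Real.sqrt_le_sqrt ht1
  have hs0 : (0 : ℝ) < s := lt_of_lt_of_le one_pos hs1
  have hss : s * s = t := Real.mul_self_sqrt ht0.le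
  have hsB : 4 * (B + 1) / m ≤ s := by
    have h' : (4 * (B + 1) / m) ^ 2 ≤ t := le_trans (le_max_right _ _) ht
    calc 4 * (B + 1) / m = Real.sqrt ((4 * (B + 1) / m) ^ 2) :=
          (Real.sqrt_sq (by positivity)).symm
      _ ≤ s := Real.sqrt_le_sqrt h'
  have hBs : B * s ≤ m / 4 * t := by
    have h1 : B ≤ m / 4 * s := by
      have h2 : m / 4 * (4 * (B + 1) / m) ≤ m / 4 * s :=
        mul_le_mul_of_nonneg_left hsB (by positivity)
      have h3 : m / 4 * (4 * (B + 1) / m) = B + 1 := by field_simp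
      linarith
    calc B * s ≤ (m / 4 * s) * s := mul_le_mul_of_nonneg_right h1 hs0.le
      _ = m / 4 * t := by rw [mul_assoc, hss]
  have hlogt0 : 0 ≤ Real.log t := Real.log_nonneg ht1
  have hlogt : Real.log t ≤ 2 * s := by
    have h1 : Real.log t = 2 * Real.log s := by
      rw [← hss, Real.log_mul hs0.ne' hs0.ne']; ring
    have h2 := Real.log_le_sub_one_of_pos hs0
    linarith
  have hpert : |Real.log a + (r * m) * Real.log t| ≤ m / 4 * t := by
    calc |Real.log a + (r * m) * Real.log t|
        ≤ |Real.log a| + |(r * m) * Real.log t| := abs_add_le _ _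
      _ = |Real.log a| + |r * m| * Real.log t := by
          rw [abs_mul, abs_of_nonneg hlogt0]
      _ ≤ |Real.log a| * s + |r * m| * (2 * s) := by
          nlinarith [abs_nonneg (Real.log a), abs_nonneg (r * m)]
      _ = B * s := by ring
      _ ≤ m / 4 * t := hBs
  -- the exponent p
  set p : ℝ := a * y ^ m * t ^ (r * m) with hpdef
  have hym : (0 : ℝ) < y ^ m := Real.rpow_pos_of_pos hy0 m
  have htrm : (0 : ℝ) < t ^ (r * m) := Real.rpow_pos_of_pos ht0 (r * m)
  have hp0 : 0 < p := mul_pos (mul_pos hapos hym) htrm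
  have hlogp : Real.log p = Real.log a + m * t + (r * m) * Real.log t := by
    rw [hpdef, Real.log_mul (mul_pos hapos hym).ne' htrm.ne',
      Real.log_mul hapos.ne' hym.ne', Real.log_rpow hy0, Real.log_rpow ht0, ← htdef]
  have hmt4 : 0 ≤ m / 4 * t := by positivity
  have habs := abs_le.mp hpert
  have hL1 : m / 2 * t ≤ Real.log p := by rw [hlogp]; linarith
  have hL2 : Real.log p ≤ 2 * m * t := by rw [hlogp]; nlinarith
  have hLpos : 0 < Real.log p := lt_of_lt_of_le (by positivity) hL1
  have hp2 : (2 : ℝ) ≤ p := by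
    have h2m : 2 / m ≤ t := le_trans (le_trans (le_max_right _ _) (le_max_left _ _)) ht
    have h1 : (1 : ℝ) ≤ m / 2 * t := by
      have := mul_le_mul_of_nonneg_left h2m (le_of_lt (by positivity : (0:ℝ) < m / 2))
      have h3 : m / 2 * (2 / m) = 1 := by field_simp
      linarith
    have hlog2 : Real.log 2 ≤ Real.log p := by
      have := Real.log_le_sub_one_of_pos (by norm_num : (0:ℝ) < 2)
      linarith
    calc (2 : ℝ) = Real.exp (Real.log 2) := (Real.exp_log (by norm_num)).symm
      _ ≤ Real.exp (Real.log p) := Real.exp_le_exp.mpr hlog2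
      _ = p := Real.exp_log hp0
  -- bound on (log p) ^ (-r)
  have hLr : Real.log p ^ (-r) ≤ (m * t) ^ (-r) * 2 ^ |r| := by
    have hmt : (0 : ℝ) < m * t := by positivity
    rcases le_or_gt 0 r with hr | hr
    · have h1 : Real.log p ^ (-r) ≤ (m / 2 * t) ^ (-r) :=
        Real.rpow_le_rpow_of_nonpos (by positivity) hL1 (neg_nonpos.mpr hr)
      have h2 : (m / 2 * t) ^ (-r) = (m * t) ^ (-r) * ((2:ℝ)⁻¹) ^ (-r) := by
        rw [show m / 2 * t = (m * t) * (2:ℝ)⁻¹ by ring,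
          Real.mul_rpow hmt.le (by norm_num)]
      have h3 : ((2:ℝ)⁻¹) ^ (-r) = (2:ℝ) ^ r := by
        rw [Real.inv_rpow (by norm_num : (0:ℝ) ≤ 2), Real.rpow_neg (by norm_num), inv_inv]
      have h4 : (2:ℝ) ^ r ≤ (2:ℝ) ^ |r| :=
        Real.rpow_le_rpow_of_exponent_le one_le_two (le_abs_self r)
      calc Real.log p ^ (-r) ≤ (m * t) ^ (-r) * ((2:ℝ)⁻¹) ^ (-r) := by rw [← h2]; exact h1
        _ = (m * t) ^ (-r) * (2:ℝ) ^ r := by rw [h3]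
        _ ≤ (m * t) ^ (-r) * (2:ℝ) ^ |r| :=
            mul_le_mul_of_nonneg_left h4 (Real.rpow_nonneg hmt.le _)
    · have h1 : Real.log p ^ (-r) ≤ (2 * m * t) ^ (-r) :=
        Real.rpow_le_rpow hLpos.le hL2 (by linarith)
      have h2 : (2 * m * t) ^ (-r) = (m * t) ^ (-r) * (2:ℝ) ^ (-r) := by
        rw [show 2 * m * t = (m * t) * 2 by ring, Real.mul_rpow hmt.le (by norm_num)]
      have h3 : |r| = -r := abs_of_neg hr
      rw [h3]
      calc Real.log p ^ (-r) ≤ (2 * m * t) ^ (-r) := h1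
        _ = (m * t) ^ (-r) * (2:ℝ) ^ (-r) := h2
  -- the key bound ψ(p) ≤ e⁻¹ y
  have hp1m : p ^ (1 / m) = a ^ (1 / m) * y * t ^ r := by
    rw [hpdef, Real.mul_rpow (mul_pos hapos hym).le htrm.le,
      Real.mul_rpow hapos.le hym.le, ← Real.rpow_mul hy0.le, ← Real.rpow_mul ht0.le,
      show m * (1 / m) = 1 by field_simp, show r * m * (1 / m) = r by field_simp,
      Real.rpow_one]
  have hψ : p ^ (1 / m) * Real.log p ^ (-r) ≤ Real.exp (-1) * y := by
    have hmr : m ^ r * m ^ (-r) = 1 := by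
      rw [← Real.rpow_add hm, add_neg_cancel, Real.rpow_zero]
    have h2r : (2:ℝ) ^ (-|r|) * (2:ℝ) ^ |r| = 1 := by
      rw [← Real.rpow_add (by norm_num : (0:ℝ) < 2), neg_add_cancel, Real.rpow_zero]
    have htr : t ^ r * t ^ (-r) = 1 := by
      rw [← Real.rpow_add ht0, add_neg_cancel, Real.rpow_zero]
    have hmtr : (m * t) ^ (-r) = m ^ (-r) * t ^ (-r) := Real.mul_rpow hm.le ht0.le
    calc p ^ (1 / m) * Real.log p ^ (-r)
        ≤ (a ^ (1 / m) * y * t ^ r) * ((m * t) ^ (-r) * 2 ^ |r|) := by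
          rw [hp1m]
          exact mul_le_mul_of_nonneg_left hLr (by positivity)
      _ = (a ^ (1 / m) * (2:ℝ) ^ |r| * m ^ (-r)) * ((t ^ r * t ^ (-r)) * y) := by
          rw [hmtr]; ring
      _ = (a ^ (1 / m) * (2:ℝ) ^ |r| * m ^ (-r)) * y := by rw [htr, one_mul]
      _ ≤ (C * (2:ℝ) ^ |r| * m ^ (-r)) * y := by
          have : a ^ (1 / m) * (2:ℝ) ^ |r| * m ^ (-r) ≤ C * (2:ℝ) ^ |r| * m ^ (-r) := by
            apply mul_le_mul_of_nonneg_right _ (Real.rpow_nonneg hm.le _)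
            exact mul_le_mul_of_nonneg_right haC (Real.rpow_nonneg (by norm_num) _)
          exact mul_le_mul_of_nonneg_right this hy0.le
      _ = Real.exp (-1) * ((m ^ r * m ^ (-r)) * ((2:ℝ) ^ (-|r|) * (2:ℝ) ^ |r|)) * y := by
          rw [hCdef]; ring
      _ = Real.exp (-1) * y := by rw [hmr, h2r]; ring
  -- Markov's inequality
  have hnonneg : ∀ ω, 0 ≤ |X ω| ^ p := fun ω => Real.rpow_nonneg (abs_nonneg _) p
  have hmarkov := mul_meas_ge_le_integral_of_nonneg (μ := P)
    (ae_of_all _ hnonneg) (hint p hp2) (y ^ p)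
  have hset : {ω | y ^ p ≤ |X ω| ^ p} = {ω | y ≤ |X ω|} := by
    ext ω
    simp only [Set.mem_setOf_eq]
    exact Real.rpow_le_rpow_iff hy0.le (abs_nonneg _) hp0
  rw [hset] at hmarkov
  -- bound the integral via the moment hypothesis
  have hInn : 0 ≤ ∫ ω, |X ω| ^ p ∂P := integral_nonneg hnonneg
  have hIb : (∫ ω, |X ω| ^ p ∂P) ≤ (p ^ (1 / m) * Real.log p ^ (-r)) ^ p := by
    have h1 : ((∫ ω, |X ω| ^ p ∂P) ^ (1 / p)) ^ p ≤ (p ^ (1 / m) * Real.log p ^ (-r)) ^ p :=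
      Real.rpow_le_rpow (Real.rpow_nonneg hInn _) (hmom p hp2) hp0.le
    rwa [← Real.rpow_mul hInn, one_div_mul_cancel hp0.ne', Real.rpow_one] at h1
  -- put everything together
  have hyp : 0 < y ^ p := Real.rpow_pos_of_pos hy0 p
  have hfinal : (P {ω | y ≤ |X ω|}).toReal ≤ Real.exp (-p) := by
    have h1 : (P {ω | y ≤ |X ω|}).toReal ≤ (∫ ω, |X ω| ^ p ∂P) / y ^ p := by
      rw [le_div_iff₀ hyp]
      simp only [Measure.real] at hmarkov
      linarith [mul_comm (y ^ p) (P {ω | y ≤ |X ω|}).toReal]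
    have hψp : (p ^ (1 / m) * Real.log p ^ (-r)) ^ p ≤ (Real.exp (-1) * y) ^ p :=
      Real.rpow_le_rpow (by positivity) hψ hp0.le
    have h3 : (Real.exp (-1) * y) ^ p / y ^ p = Real.exp (-1) ^ p := by
      rw [Real.mul_rpow (Real.exp_pos _).le hy0.le]
      field_simp
    have h4 : Real.exp (-1) ^ p = Real.exp (-p) := by
      rw [Real.rpow_def_of_pos (Real.exp_pos _), Real.log_exp,
        show (-1 : ℝ) * p = -p by ring]
    calc (P {ω | y ≤ |X ω|}).toReal ≤ (∫ ω, |X ω| ^ p ∂P) / y ^ p := h1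
      _ ≤ (Real.exp (-1) * y) ^ p / y ^ p := by gcongr; exact hIb.trans hψp
      _ = Real.exp (-p) := by rw [h3, h4]
  have hexp_eq : Real.exp (-p) = Real.exp (-a * y ^ m * t ^ (r * m)) := by
    congr 1
    rw [hpdef]; ring
  rw [← ENNReal.ofReal_toReal (measure_ne_top P {ω | y ≤ |X ω|})]
  exact ENNReal.ofReal_le_ofReal (hfinal.trans_eq hexp_eq)
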